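/- Let 0 < q < 1/2 and let f be a solution of Schilling's problem. If f is bounded on a neighbourhood of ε·∑_{i=1}^{n} qⁱ for some nonnegative integer n and some ε ∈ {-1,1}, then f(x) = 0 for all x with |x| < 1 - Q. -/

import Mathlib

private lemma schilling_sum_succ (q : ℝ) (n : ℕ) :
    (∑ i ∈ Finset.Icc 1 (n+1), q ^ i) = q * (1 + ∑ i ∈ Finset.Icc 1 n, q ^ i) := by
  induction n with
  | zero => simp
  | succ n ih =>
    conv_lhs => rw [Finset.sum_Icc_succ_top (by omega : 1 ≤ n + 1 + 1), ih]
    rw [Finset.sum_Icc_succ_top (by omega : 1 ≤ n + 1)]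
    ring

private lemma schilling_sum_bound (q : ℝ) (hq : 0 < q) (hq1 : q < 1/2) (n : ℕ) :
    0 ≤ (∑ i ∈ Finset.Icc 1 n, q ^ i) ∧ (∑ i ∈ Finset.Icc 1 n, q ^ i) ≤ q / (1 - q) := by
  have h1q : (0:ℝ) < 1 - q := by linarith
  induction n with
  | zero =>
    have h0 : (∑ i ∈ Finset.Icc 1 0, q ^ i) = 0 := by simp
    rw [h0]
    exact ⟨le_refl 0, by positivity⟩
  | succ n ih =>
    rw [schilling_sum_succ]
    have h2 := (le_div_iff₀ h1q).mp ih.2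
    constructor
    · nlinarith [ih.1]
    · rw [le_div_iff₀ h1q]
      nlinarith [ih.1]

theorem schilling_bounded_vanish (q : ℝ) (hq : 0 < q) (hq1 : q < 1 / 2)
    (f : ℝ → ℝ)
    (heq : ∀ x : ℝ, f (q * x) = 1 / (4 * q) * (f (x - 1) + f (x + 1) + 2 * f x))
    (hQ : ∀ x : ℝ, |x| > q / (1 - q) → f x = 0)
    (n : ℕ) (ε : ℝ) (hε : ε = -1 ∨ ε = 1)
    (hbdd : ∃ δ > 0, ∃ M : ℝ, ∀ x : ℝ,
      |x - ε * ∑ i ∈ Finset.Icc 1 n, q ^ i| < δ → |f x| ≤ M) :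
    ∀ x : ℝ, |x| < 1 - q / (1 - q) → f x = 0 := by
  have h1q : (0:ℝ) < 1 - q := by linarith
  have hQ0 : (0:ℝ) ≤ q / (1 - q) := by positivity
  have hQlt : q / (1 - q) < 1 := by rw [div_lt_one h1q]; linarith
  -- Step 1: f is bounded near 0
  have key : ∀ m : ℕ, (∃ δ > 0, ∃ M : ℝ, ∀ x : ℝ,
      |x - ε * ∑ i ∈ Finset.Icc 1 m, q ^ i| < δ → |f x| ≤ M) →
      ∃ δ > 0, ∃ M : ℝ, ∀ x : ℝ, |x| < δ → |f x| ≤ M := by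
    intro m
    induction m with
    | zero =>
      rintro ⟨δ, hδ, M, hM⟩
      exact ⟨δ, hδ, M, fun x hx => hM x (by simpa using hx)⟩
    | succ k ih =>
      rintro ⟨δ, hδ, M, hM⟩
      apply ih
      obtain ⟨hS0, hSQ⟩ := schilling_sum_bound q hq hq1 k
      set S := ∑ i ∈ Finset.Icc 1 k, q ^ i with hSdef
      have hδ' : (0:ℝ) < min (δ / q) ((1 - q / (1 - q))/2) :=
        lt_min (div_pos hδ hq) (by linarith)
      refine ⟨min (δ / q) ((1 - q / (1 - q))/2), hδ', 4*q*M, ?_⟩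
      intro z hz
      have hz1 : |z - ε * S| < (1 - q / (1 - q))/2 :=
        lt_of_lt_of_le hz (min_le_right _ _)
      have hz1' := abs_lt.mp hz1
      have hz2 : q * |z - ε * S| < δ := by
        have h3 : |z - ε * S| < δ / q := lt_of_lt_of_le hz (min_le_left _ _)
        calc q * |z - ε * S| < q * (δ / q) := by
              exact mul_lt_mul_of_pos_left h3 hq
          _ = δ := by field_simp
      rcases hε with hε | hε
      · -- ε = -1
        subst hε
        have hE := heq (z - 1)
        have e0 : z - 1 + 1 = z := by ring
        rw [e0] at hE
        have e1 : f (z - 1 - 1) = 0 := by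
          apply hQ
          have : q / (1 - q) < -(z - 1 - 1) := by
            simp only [neg_one_mul] at hz1'
            linarith [hz1'.2]
          exact lt_of_lt_of_le this (neg_le_abs _)
        have e2 : f (z - 1) = 0 := by
          apply hQ
          have : q / (1 - q) < -(z - 1) := by
            simp only [neg_one_mul] at hz1'
            linarith [hz1'.2]
          exact lt_of_lt_of_le this (neg_le_abs _)
        rw [e1, e2] at hE
        have hfz : f z = 4 * q * f (q * (z - 1)) := by
          field_simp at hE
          linarith
        have harg : |q * (z - 1) - (-1) * ∑ i ∈ Finset.Icc 1 (k+1), q ^ i| < δ := by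
          rw [schilling_sum_succ]
          have : q * (z - 1) - (-1) * (q * (1 + S)) = q * (z - (-1) * S) := by ring
          rw [this, abs_mul, abs_of_pos hq]
          exact hz2
        have hb := hM _ harg
        rw [hfz, abs_mul, abs_of_pos (by positivity : (0:ℝ) < 4*q)]
        exact mul_le_mul_of_nonneg_left hb (by positivity)
      · -- ε = 1
        subst hε
        have hE := heq (z + 1)
        have e0 : z + 1 - 1 = z := by ring
        rw [e0] at hE
        have e1 : f (z + 1 + 1) = 0 := by
          apply hQ
          have : q / (1 - q) < z + 1 + 1 := by
            simp only [one_mul] at hz1'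
            linarith [hz1'.1]
          exact lt_of_lt_of_le this (le_abs_self _)
        have e2 : f (z + 1) = 0 := by
          apply hQ
          have : q / (1 - q) < z + 1 := by
            simp only [one_mul] at hz1'
            linarith [hz1'.1]
          exact lt_of_lt_of_le this (le_abs_self _)
        rw [e1, e2] at hE
        have hfz : f z = 4 * q * f (q * (z + 1)) := by
          field_simp at hE
          linarith
        have harg : |q * (z + 1) - 1 * ∑ i ∈ Finset.Icc 1 (k+1), q ^ i| < δ := by
          rw [schilling_sum_succ]
          have : q * (z + 1) - 1 * (q * (1 + S)) = q * (z - 1 * S) := by ring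
          rw [this, abs_mul, abs_of_pos hq]
          exact hz2
        have hb := hM _ harg
        rw [hfz, abs_mul, abs_of_pos (by positivity : (0:ℝ) < 4*q)]
        exact mul_le_mul_of_nonneg_left hb (by positivity)
  obtain ⟨δ0, hδ0, M0, hM0⟩ := key n hbdd
  -- Step 2: contraction
  intro x hx
  have step : ∀ y : ℝ, |y| < 1 - q / (1 - q) → f y = 2 * q * f (q * y) := by
    intro y hy
    have hy' := abs_lt.mp hy
    have e1 : f (y - 1) = 0 := by
      apply hQ
      have : q / (1 - q) < -(y - 1) := by linarith [hy'.2]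
      exact lt_of_lt_of_le this (neg_le_abs _)
    have e2 : f (y + 1) = 0 := by
      apply hQ
      have : q / (1 - q) < y + 1 := by linarith [hy'.1]
      exact lt_of_lt_of_le this (le_abs_self _)
    have hE := heq y
    rw [e1, e2] at hE
    field_simp at hE
    linarith
  have iter : ∀ k : ℕ, f x = (2*q)^k * f (q^k * x) := by
    intro k
    induction k with
    | zero => simp
    | succ k ih =>
      have hsmall : |q^k * x| < 1 - q / (1 - q) := by
        rw [abs_mul, abs_of_pos (by positivity : (0:ℝ) < q^k)]
        calc q^k * |x| ≤ 1 * |x| := by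
              apply mul_le_mul_of_nonneg_right _ (abs_nonneg x)
              exact pow_le_one₀ (le_of_lt hq) (by linarith)
          _ = |x| := one_mul _
          _ < _ := hx
      rw [ih, step _ hsmall]
      have : q * (q^k * x) = q^(k+1) * x := by ring
      rw [this]
      ring
  -- Step 3: limit
  have h2q : |2*q| < 1 := by rw [abs_of_pos (by positivity)]; linarith
  have hqlt : |q| < 1 := by rw [abs_of_pos hq]; linarith
  have htend : Filter.Tendsto (fun k : ℕ => (2*q)^k * M0) Filter.atTop (nhds 0) := by
    have := (tendsto_pow_atTop_nhds_zero_of_abs_lt_one h2q).mul_const M0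
    simpa using this
  have hqx : Filter.Tendsto (fun k : ℕ => q^k * |x|) Filter.atTop (nhds 0) := by
    have := (tendsto_pow_atTop_nhds_zero_of_abs_lt_one hqlt).mul_const |x|
    simpa using this
  have hev : ∀ᶠ k : ℕ in Filter.atTop, |f x| ≤ (2*q)^k * M0 := by
    have hev1 : ∀ᶠ k : ℕ in Filter.atTop, q^k * |x| < δ0 :=
      hqx.eventually (gt_mem_nhds hδ0)
    filter_upwards [hev1] with k hk
    have hbk : |f (q^k * x)| ≤ M0 := by
      apply hM0
      rw [abs_mul, abs_of_pos (by positivity : (0:ℝ) < q^k)]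
      exact hk
    calc |f x| = (2*q)^k * |f (q^k * x)| := by
          rw [iter k, abs_mul, abs_of_pos (by positivity : (0:ℝ) < (2*q)^k)]
      _ ≤ (2*q)^k * M0 := mul_le_mul_of_nonneg_left hbk (by positivity)
  have : |f x| ≤ 0 := ge_of_tendsto htend hev
  have := abs_nonneg (f x)
  have : |f x| = 0 := le_antisymm ‹|f x| ≤ 0› this
  exact abs_eq_zero.mp this
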